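/- Let G : (ℝ^k × ℝ^{m_I} × ℝ^{m_E}) × (ℝ^k × ℝ^{m_I} × ℝ^{m_E}) → ℝ^{k+m_I+m_E} be the parameterized KKT residual map G(θ; z, ν, λ) with parameter θ = (q₀, r, g): G(θ; z, ν, λ) = (P₀z + q₀ + Σ_i ν_i(P_iz + q_i) + Σ_j λ_j(D_jz + h_j); (ν_i·((1/2)zᵀP_iz + q_iᵀz + r_i))_{i}; ((1/2)zᵀD_jz + h_jᵀz + g_j)_{j}). Suppose G(θ⁰; z*, ν*, λ*) = 0 and the KKT differential matrix M at (z*, ν*, λ*) with parameters θ⁰ is invertible. Then there exist a neighborhood U of θ⁰ and a differentiable map φ : U → ℝ^k × ℝ^{m_I} × ℝ^{m_E} such that φ(θ⁰) = (z*, ν*, λ*) and G(θ; φ(θ)) = 0 for all θ ∈ U. -/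

import Mathlib

open Matrix BigOperators

/-- The KKT differential matrix `M` of the QCQP, evaluated at a primal-dual point
`(z, ν, λ)`: its first block row is `[Q, P_1z+q_1, …, D_1z+h_1, …]` with
`Q = P₀ + Σ_i ν_i P_i + Σ_j λ_j D_j`, its `i`-th inequality row is
`[ν_i (P_iz+q_i)ᵀ, ((1/2)zᵀP_iz + q_iᵀz + r_i)·e_iᵀ, 0]` and its `j`-th equality row is
`[(D_jz+h_j)ᵀ, 0, 0]`. -/
noncomputable def kktMatrix {k mI mE : ℕ}
    (P0 : Matrix (Fin k) (Fin k) ℝ)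
    (P : Fin mI → Matrix (Fin k) (Fin k) ℝ) (q : Fin mI → Fin k → ℝ) (r : Fin mI → ℝ)
    (D : Fin mE → Matrix (Fin k) (Fin k) ℝ) (h : Fin mE → Fin k → ℝ)
    (z : Fin k → ℝ) (ν : Fin mI → ℝ) (lam : Fin mE → ℝ) :
    Matrix (Fin k ⊕ (Fin mI ⊕ Fin mE)) (Fin k ⊕ (Fin mI ⊕ Fin mE)) ℝ :=
  Matrix.fromBlocks
    (P0 + ∑ i, ν i • P i + ∑ j, lam j • D j)
    (Matrix.of fun a ij =>
      Sum.elim (fun i => ((P i).mulVec z + q i) a) (fun j => ((D j).mulVec z + h j) a) ij)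
    (Matrix.of fun ij b =>
      Sum.elim (fun i => ν i * ((P i).mulVec z + q i) b)
        (fun j => ((D j).mulVec z + h j) b) ij)
    (Matrix.of fun ij ij' =>
      Sum.elim
        (fun i => Sum.elim
          (fun i' => if i' = i then (1 / 2) * (z ⬝ᵥ (P i).mulVec z) + q i ⬝ᵥ z + r i else 0)
          (fun _ => 0) ij')
        (fun _ => 0) ij)

/-- The KKT residual map `G(θ; z, ν, λ)` of the QCQP, parameterized by
`θ = (q₀, r, g)`: the stationarity residual, the complementary-slackness residuals
`ν_i·((1/2)zᵀP_iz + q_iᵀz + r_i)` and the equality residuals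
`(1/2)zᵀD_jz + h_jᵀz + g_j`. -/
noncomputable def kktResidualParam {k mI mE : ℕ}
    (P0 : Matrix (Fin k) (Fin k) ℝ)
    (P : Fin mI → Matrix (Fin k) (Fin k) ℝ) (q : Fin mI → Fin k → ℝ)
    (D : Fin mE → Matrix (Fin k) (Fin k) ℝ) (h : Fin mE → Fin k → ℝ)
    (θ : (Fin k → ℝ) × (Fin mI → ℝ) × (Fin mE → ℝ))
    (p : (Fin k → ℝ) × (Fin mI → ℝ) × (Fin mE → ℝ)) :
    (Fin k ⊕ (Fin mI ⊕ Fin mE)) → ℝ :=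
  Sum.elim
    (P0.mulVec p.1 + θ.1 + ∑ i, p.2.1 i • ((P i).mulVec p.1 + q i)
      + ∑ j, p.2.2 j • ((D j).mulVec p.1 + h j))
    (Sum.elim
      (fun i => p.2.1 i * ((1 / 2) * (p.1 ⬝ᵥ (P i).mulVec p.1) + q i ⬝ᵥ p.1 + θ.2.1 i))
      (fun j => (1 / 2) * (p.1 ⬝ᵥ (D j).mulVec p.1) + h j ⬝ᵥ p.1 + θ.2.2 j))


section KKTAux

attribute [local fun_prop] ContDiff.sum

variable {k mI mE : ℕ}

local notation "Ep" => ((Fin k → ℝ) × (Fin mI → ℝ) × (Fin mE → ℝ))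
local notation "Sk" => (Fin k ⊕ (Fin mI ⊕ Fin mE))

private lemma dot_symm (A : Matrix (Fin k) (Fin k) ℝ) (hA : A.IsSymm) (v w : Fin k → ℝ) :
    v ⬝ᵥ A.mulVec w = w ⬝ᵥ A.mulVec v := by
  simp only [dotProduct, mulVec, Finset.mul_sum]
  rw [Finset.sum_comm]
  refine Finset.sum_congr rfl fun b _ => Finset.sum_congr rfl fun c _ => ?_
  rw [hA.apply c b]; ring

private lemma resid_inl (P0 : Matrix (Fin k) (Fin k) ℝ)
    (P : Fin mI → Matrix (Fin k) (Fin k) ℝ) (q : Fin mI → Fin k → ℝ)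
    (D : Fin mE → Matrix (Fin k) (Fin k) ℝ) (h : Fin mE → Fin k → ℝ)
    (θ p : Ep) (a : Fin k) :
    kktResidualParam P0 P q D h θ p (Sum.inl a) =
      (∑ b, P0 a b * p.1 b) + θ.1 a
        + ∑ i, p.2.1 i * ((∑ b, P i a b * p.1 b) + q i a)
        + ∑ j, p.2.2 j * ((∑ b, D j a b * p.1 b) + h j a) := by
  simp [kktResidualParam, mulVec, dotProduct, mul_add]

private lemma resid_inr_inl (P0 : Matrix (Fin k) (Fin k) ℝ)
    (P : Fin mI → Matrix (Fin k) (Fin k) ℝ) (q : Fin mI → Fin k → ℝ)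
    (D : Fin mE → Matrix (Fin k) (Fin k) ℝ) (h : Fin mE → Fin k → ℝ)
    (θ p : Ep) (i : Fin mI) :
    kktResidualParam P0 P q D h θ p (Sum.inr (Sum.inl i)) =
      p.2.1 i * ((1 / 2) * (∑ b, p.1 b * ∑ c, P i b c * p.1 c)
        + (∑ b, q i b * p.1 b) + θ.2.1 i) := by
  simp [kktResidualParam, mulVec, dotProduct, mul_add]

private lemma resid_inr_inr (P0 : Matrix (Fin k) (Fin k) ℝ)
    (P : Fin mI → Matrix (Fin k) (Fin k) ℝ) (q : Fin mI → Fin k → ℝ)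
    (D : Fin mE → Matrix (Fin k) (Fin k) ℝ) (h : Fin mE → Fin k → ℝ)
    (θ p : Ep) (j : Fin mE) :
    kktResidualParam P0 P q D h θ p (Sum.inr (Sum.inr j)) =
      (1 / 2) * (∑ b, p.1 b * ∑ c, D j b c * p.1 c)
        + (∑ b, h j b * p.1 b) + θ.2.2 j := by
  simp [kktResidualParam, mulVec, dotProduct, mul_add]

private lemma resid_smooth (P0 : Matrix (Fin k) (Fin k) ℝ)
    (P : Fin mI → Matrix (Fin k) (Fin k) ℝ) (q : Fin mI → Fin k → ℝ)
    (D : Fin mE → Matrix (Fin k) (Fin k) ℝ) (h : Fin mE → Fin k → ℝ) :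
    ContDiff ℝ 1 (fun u : Ep × Ep => kktResidualParam P0 P q D h u.1 u.2) := by
  rw [contDiff_pi]
  rintro (a | i | j)
  · simp only [resid_inl]; fun_prop
  · simp only [resid_inr_inl]; fun_prop
  · simp only [resid_inr_inr]; fun_prop

end KKTAux

section KKTDeriv

variable {k mI mE : ℕ}

local notation "Ep" => ((Fin k → ℝ) × (Fin mI → ℝ) × (Fin mE → ℝ))
local notation "Sk" => (Fin k ⊕ (Fin mI ⊕ Fin mE))

private noncomputable def zCLM (b : Fin k) : (Ep × Ep) →L[ℝ] ℝ :=
  (ContinuousLinearMap.proj b).comp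
    ((ContinuousLinearMap.fst ℝ _ _).comp (ContinuousLinearMap.snd ℝ Ep Ep))

private noncomputable def nuCLM (i : Fin mI) : (Ep × Ep) →L[ℝ] ℝ :=
  (ContinuousLinearMap.proj i).comp
    ((ContinuousLinearMap.fst ℝ _ _).comp
      ((ContinuousLinearMap.snd ℝ _ _).comp (ContinuousLinearMap.snd ℝ Ep Ep)))

private noncomputable def laCLM (j : Fin mE) : (Ep × Ep) →L[ℝ] ℝ :=
  (ContinuousLinearMap.proj j).comp
    ((ContinuousLinearMap.snd ℝ _ _).comp
      ((ContinuousLinearMap.snd ℝ _ _).comp (ContinuousLinearMap.snd ℝ Ep Ep)))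

private noncomputable def th1CLM (a : Fin k) : (Ep × Ep) →L[ℝ] ℝ :=
  (ContinuousLinearMap.proj a).comp
    ((ContinuousLinearMap.fst ℝ _ _).comp (ContinuousLinearMap.fst ℝ Ep Ep))

private noncomputable def thrCLM (i : Fin mI) : (Ep × Ep) →L[ℝ] ℝ :=
  (ContinuousLinearMap.proj i).comp
    ((ContinuousLinearMap.fst ℝ _ _).comp
      ((ContinuousLinearMap.snd ℝ _ _).comp (ContinuousLinearMap.fst ℝ Ep Ep)))

private noncomputable def thgCLM (j : Fin mE) : (Ep × Ep) →L[ℝ] ℝ :=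
  (ContinuousLinearMap.proj j).comp
    ((ContinuousLinearMap.snd ℝ _ _).comp
      ((ContinuousLinearMap.snd ℝ _ _).comp (ContinuousLinearMap.fst ℝ Ep Ep)))

/-- Explicit formula for the derivative of the KKT residual at `(θ0, (zs, ν, lam))`. -/
private noncomputable def wtarget (P0 : Matrix (Fin k) (Fin k) ℝ)
    (P : Fin mI → Matrix (Fin k) (Fin k) ℝ) (q : Fin mI → Fin k → ℝ)
    (D : Fin mE → Matrix (Fin k) (Fin k) ℝ) (h : Fin mE → Fin k → ℝ)
    (θ0 : Ep) (zs : Fin k → ℝ) (ν : Fin mI → ℝ) (lam : Fin mE → ℝ)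
    (du : Ep × Ep) : Sk → ℝ :=
  Sum.elim
    (fun a => (P0.mulVec du.2.1) a + du.1.1 a
      + ∑ i, (du.2.2.1 i * ((P i).mulVec zs a + q i a) + ν i * (P i).mulVec du.2.1 a)
      + ∑ j, (du.2.2.2 j * ((D j).mulVec zs a + h j a) + lam j * (D j).mulVec du.2.1 a))
    (Sum.elim
      (fun i => du.2.2.1 i * ((1 / 2) * (zs ⬝ᵥ (P i).mulVec zs) + q i ⬝ᵥ zs + θ0.2.1 i)
        + ν i * ((1 / 2) * (du.2.1 ⬝ᵥ (P i).mulVec zs)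
          + (1 / 2) * (zs ⬝ᵥ (P i).mulVec du.2.1)
          + q i ⬝ᵥ du.2.1 + du.1.2.1 i))
      (fun j => (1 / 2) * (du.2.1 ⬝ᵥ (D j).mulVec zs)
        + (1 / 2) * (zs ⬝ᵥ (D j).mulVec du.2.1)
        + h j ⬝ᵥ du.2.1 + du.1.2.2 j))

set_option maxHeartbeats 2000000 in
private lemma kkt_deriv (P0 : Matrix (Fin k) (Fin k) ℝ)
    (P : Fin mI → Matrix (Fin k) (Fin k) ℝ) (q : Fin mI → Fin k → ℝ)
    (D : Fin mE → Matrix (Fin k) (Fin k) ℝ) (h : Fin mE → Fin k → ℝ)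
    (θ0 : Ep) (zs : Fin k → ℝ) (ν : Fin mI → ℝ) (lam : Fin mE → ℝ) :
    ∃ Lw : (Ep × Ep) →L[ℝ] (Sk → ℝ),
      HasFDerivAt (fun u : Ep × Ep => kktResidualParam P0 P q D h u.1 u.2) Lw
        (θ0, (zs, ν, lam)) ∧
      ∀ du, Lw du = wtarget P0 P q D h θ0 zs ν lam du := by
  have hz : ∀ b : Fin k, HasFDerivAt (fun u : Ep × Ep => u.2.1 b) (zCLM b)
      (θ0, (zs, ν, lam)) := fun b => (zCLM b).hasFDerivAt
  have hnu : ∀ i : Fin mI, HasFDerivAt (fun u : Ep × Ep => u.2.2.1 i) (nuCLM i)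
      (θ0, (zs, ν, lam)) := fun i => (nuCLM i).hasFDerivAt
  have hla : ∀ j : Fin mE, HasFDerivAt (fun u : Ep × Ep => u.2.2.2 j) (laCLM j)
      (θ0, (zs, ν, lam)) := fun j => (laCLM j).hasFDerivAt
  have hth1 : ∀ a : Fin k, HasFDerivAt (fun u : Ep × Ep => u.1.1 a) (th1CLM a)
      (θ0, (zs, ν, lam)) := fun a => (th1CLM a).hasFDerivAt
  have hthr : ∀ i : Fin mI, HasFDerivAt (fun u : Ep × Ep => u.1.2.1 i) (thrCLM i)
      (θ0, (zs, ν, lam)) := fun i => (thrCLM i).hasFDerivAt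
  have hthg : ∀ j : Fin mE, HasFDerivAt (fun u : Ep × Ep => u.1.2.2 j) (thgCLM j)
      (θ0, (zs, ν, lam)) := fun j => (thgCLM j).hasFDerivAt
  have hmv : ∀ (A : Matrix (Fin k) (Fin k) ℝ) (b : Fin k),
      HasFDerivAt (fun u : Ep × Ep => ∑ c, A b c * u.2.1 c) (∑ c, A b c • zCLM c)
        (θ0, (zs, ν, lam)) :=
    fun A b => HasFDerivAt.fun_sum fun c _ => (hz c).const_mul (A b c)
  have hvq : ∀ (A : Matrix (Fin k) (Fin k) ℝ) (v : Fin k → ℝ),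
      HasFDerivAt (fun u : Ep × Ep => ∑ b, v b * u.2.1 b) (∑ b, v b • zCLM b)
        (θ0, (zs, ν, lam)) :=
    fun A v => HasFDerivAt.fun_sum fun b _ => (hz b).const_mul (v b)
  have hquad : ∀ (A : Matrix (Fin k) (Fin k) ℝ),
      HasFDerivAt (fun u : Ep × Ep => ∑ b, u.2.1 b * ∑ c, A b c * u.2.1 c)
        (∑ b, (zs b • (∑ c, A b c • zCLM c) + (∑ c, A b c * zs c) • zCLM b))
        (θ0, (zs, ν, lam)) :=
    fun A => HasFDerivAt.fun_sum fun b _ => (hz b).mul (hmv A b)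
  have key : ∀ s : Sk, ∃ Ls : (Ep × Ep) →L[ℝ] ℝ,
      HasFDerivAt (fun u : Ep × Ep => kktResidualParam P0 P q D h u.1 u.2 s) Ls
        (θ0, (zs, ν, lam)) ∧
      ∀ du, Ls du = wtarget P0 P q D h θ0 zs ν lam du s := by
    rintro (a | i | j)
    · simp only [resid_inl]
      refine ⟨_, (((HasFDerivAt.fun_sum fun b _ => (hz b).const_mul (P0 a b)).add
          (hth1 a)).add
          (HasFDerivAt.fun_sum fun i _ => (hnu i).mul ((hmv (P i) a).add_const (q i a)))).add
          (HasFDerivAt.fun_sum fun j _ => (hla j).mul ((hmv (D j) a).add_const (h j a))),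
        fun du => ?_⟩
      simp [wtarget, Matrix.mulVec, dotProduct, zCLM, nuCLM, laCLM, th1CLM, Finset.sum_add_distrib, mul_add, add_mul,
        Finset.mul_sum, mul_comm, mul_left_comm]
      ring
    · simp only [resid_inr_inl]
      refine ⟨_, (hnu i).mul ((((hquad (P i)).const_mul (1 / 2)).add
          (hvq (P i) (q i))).add (hthr i)), fun du => ?_⟩
      simp [wtarget, Matrix.mulVec, dotProduct, zCLM, nuCLM, thrCLM, Finset.sum_add_distrib, mul_add, add_mul,
        Finset.mul_sum, mul_comm, mul_left_comm]
      ring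
    · simp only [resid_inr_inr]
      refine ⟨_, (((hquad (D j)).const_mul (1 / 2)).add (hvq (D j) (h j))).add (hthg j),
        fun du => ?_⟩
      simp [wtarget, Matrix.mulVec, dotProduct, zCLM, thgCLM, Finset.sum_add_distrib, mul_add, add_mul,
        Finset.mul_sum, mul_comm, mul_left_comm]
      ring
  choose Lf hL1 hL2 using key
  refine ⟨ContinuousLinearMap.pi Lf, hasFDerivAt_pi.2 hL1, fun du => ?_⟩
  funext s
  simpa using hL2 s du

end KKTDeriv

section KKTMatrixEq

variable {k mI mE : ℕ}

local notation "Ep" => ((Fin k → ℝ) × (Fin mI → ℝ) × (Fin mE → ℝ))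
local notation "Sk" => (Fin k ⊕ (Fin mI ⊕ Fin mE))

set_option maxHeartbeats 1000000 in
private lemma wtarget_eq (P0 : Matrix (Fin k) (Fin k) ℝ)
    (P : Fin mI → Matrix (Fin k) (Fin k) ℝ) (q : Fin mI → Fin k → ℝ)
    (D : Fin mE → Matrix (Fin k) (Fin k) ℝ) (h : Fin mE → Fin k → ℝ)
    (hP : ∀ i, (P i).IsSymm) (hD : ∀ j, (D j).IsSymm)
    (θ0 : Ep) (zs : Fin k → ℝ) (ν : Fin mI → ℝ) (lam : Fin mE → ℝ) (du : Ep × Ep) :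
    wtarget P0 P q D h θ0 zs ν lam du =
      Sum.elim du.1.1 (Sum.elim (fun i => ν i * du.1.2.1 i) du.1.2.2)
        + (kktMatrix P0 P q θ0.2.1 D h zs ν lam) *ᵥ
            (Sum.elim du.2.1 (Sum.elim du.2.2.1 du.2.2.2)) := by
  have swapI : ∀ f : Fin k → Fin mI → ℝ, ∑ b, ∑ i, f b i = ∑ i, ∑ b, f b i :=
    fun f => Finset.sum_comm
  have swapE : ∀ f : Fin k → Fin mE → ℝ, ∑ b, ∑ j, f b j = ∑ j, ∑ b, f b j :=
    fun f => Finset.sum_comm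
  have hrw : kktMatrix P0 P q θ0.2.1 D h zs ν lam *ᵥ
      (Sum.elim du.2.1 (Sum.elim du.2.2.1 du.2.2.2)) =
      Sum.elim
        ((P0 + ∑ i, ν i • P i + ∑ j, lam j • D j) *ᵥ du.2.1 +
          (Matrix.of fun (a : Fin k) (ij : Fin mI ⊕ Fin mE) =>
            Sum.elim (fun i => ((P i).mulVec zs + q i) a)
              (fun j => ((D j).mulVec zs + h j) a) ij) *ᵥ (Sum.elim du.2.2.1 du.2.2.2))
        ((Matrix.of fun (ij : Fin mI ⊕ Fin mE) (b : Fin k) =>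
            Sum.elim (fun i => ν i * ((P i).mulVec zs + q i) b)
              (fun j => ((D j).mulVec zs + h j) b) ij) *ᵥ du.2.1 +
          (Matrix.of fun (ij ij' : Fin mI ⊕ Fin mE) => Sum.elim (fun i => Sum.elim
              (fun i' => if i' = i then (1 / 2) * (zs ⬝ᵥ (P i).mulVec zs) + q i ⬝ᵥ zs
                + θ0.2.1 i else 0) (fun _ => 0) ij') (fun _ => 0) ij)
            *ᵥ (Sum.elim du.2.2.1 du.2.2.2)) := by
    rw [kktMatrix, Matrix.fromBlocks_mulVec]
    simp only [Sum.elim_comp_inl, Sum.elim_comp_inr]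
  have hQ : ∀ a : Fin k, ((P0 + ∑ i, ν i • P i + ∑ j, lam j • D j) *ᵥ du.2.1) a
      = (P0 *ᵥ du.2.1) a + ∑ i, ν i * (P i *ᵥ du.2.1) a + ∑ j, lam j * (D j *ᵥ du.2.1) a := by
    intro a
    simp only [Matrix.mulVec, dotProduct, Matrix.add_apply, Matrix.sum_apply,
      Matrix.smul_apply, smul_eq_mul, add_mul, Finset.sum_mul, Finset.mul_sum,
      Finset.sum_add_distrib, mul_assoc, swapI, swapE]
  have hB : ∀ a : Fin k, ((Matrix.of fun (a : Fin k) (ij : Fin mI ⊕ Fin mE) =>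
      Sum.elim (fun i => (P i).mulVec zs a + q i a)
        (fun j => (D j).mulVec zs a + h j a) ij) *ᵥ (Sum.elim du.2.2.1 du.2.2.2)) a
      = ∑ i, du.2.2.1 i * ((P i).mulVec zs a + q i a)
        + ∑ j, du.2.2.2 j * ((D j).mulVec zs a + h j a) := by
    intro a
    simp [Matrix.mulVec, dotProduct, Fintype.sum_sum_type, mul_comm]
  have hC : ∀ s, ((Matrix.of fun (ij : Fin mI ⊕ Fin mE) (b : Fin k) =>
      Sum.elim (fun i => ν i * ((P i).mulVec zs b + q i b))
        (fun j => (D j).mulVec zs b + h j b) ij) *ᵥ du.2.1) s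
      = Sum.elim (fun i => ν i * ((P i).mulVec zs ⬝ᵥ du.2.1 + q i ⬝ᵥ du.2.1))
          (fun j => (D j).mulVec zs ⬝ᵥ du.2.1 + h j ⬝ᵥ du.2.1) s := by
    rintro (i | j) <;>
      simp [Matrix.mulVec, dotProduct, Finset.mul_sum, Finset.sum_mul,
        Finset.sum_add_distrib, mul_add, add_mul, mul_assoc]
  have hDg : ∀ s, ((Matrix.of fun (ij ij' : Fin mI ⊕ Fin mE) => Sum.elim (fun i => Sum.elim
      (fun i' => if i' = i then (1 / 2) * (zs ⬝ᵥ (P i).mulVec zs) + q i ⬝ᵥ zs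
        + θ0.2.1 i else 0) (fun _ => 0) ij') (fun _ => 0) ij)
      *ᵥ (Sum.elim du.2.2.1 du.2.2.2)) s
      = Sum.elim (fun i => ((1 / 2) * (zs ⬝ᵥ (P i).mulVec zs) + q i ⬝ᵥ zs + θ0.2.1 i)
          * du.2.2.1 i) (fun _ => 0) s := by
    rintro (i | j) <;>
      simp [Matrix.mulVec, dotProduct, Fintype.sum_sum_type]
  funext s
  rw [Pi.add_apply, hrw]
  rcases s with a | i | j
  · rw [show wtarget P0 P q D h θ0 zs ν lam du (Sum.inl a)
        = (P0.mulVec du.2.1) a + du.1.1 a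
          + ∑ i, (du.2.2.1 i * ((P i).mulVec zs a + q i a) + ν i * (P i).mulVec du.2.1 a)
          + ∑ j, (du.2.2.2 j * ((D j).mulVec zs a + h j a)
            + lam j * (D j).mulVec du.2.1 a) from rfl]
    simp only [Sum.elim_inl, Pi.add_apply]
    rw [hQ a, hB a]
    simp only [Finset.sum_add_distrib]
    ring
  · rw [show wtarget P0 P q D h θ0 zs ν lam du (Sum.inr (Sum.inl i))
        = du.2.2.1 i * ((1 / 2) * (zs ⬝ᵥ (P i).mulVec zs) + q i ⬝ᵥ zs + θ0.2.1 i)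
          + ν i * ((1 / 2) * (du.2.1 ⬝ᵥ (P i).mulVec zs)
            + (1 / 2) * (zs ⬝ᵥ (P i).mulVec du.2.1)
            + q i ⬝ᵥ du.2.1 + du.1.2.1 i) from rfl,
      dot_symm (P i) (hP i) zs du.2.1]
    simp only [Sum.elim_inr, Sum.elim_inl, Pi.add_apply]
    rw [hC (Sum.inl i), hDg (Sum.inl i)]
    simp only [Sum.elim_inl]
    rw [dotProduct_comm ((P i).mulVec zs) du.2.1,
      dotProduct_comm (q i) du.2.1]
    ring
  · rw [show wtarget P0 P q D h θ0 zs ν lam du (Sum.inr (Sum.inr j))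
        = (1 / 2) * (du.2.1 ⬝ᵥ (D j).mulVec zs) + (1 / 2) * (zs ⬝ᵥ (D j).mulVec du.2.1)
          + h j ⬝ᵥ du.2.1 + du.1.2.2 j from rfl,
      dot_symm (D j) (hD j) zs du.2.1]
    simp only [Sum.elim_inr, Pi.add_apply]
    rw [hC (Sum.inr j), hDg (Sum.inr j)]
    simp only [Sum.elim_inr]
    rw [dotProduct_comm ((D j).mulVec zs) du.2.1,
      dotProduct_comm (h j) du.2.1]
    ring

end KKTMatrixEq

set_option maxHeartbeats 1000000 in
/-- If `G(θ⁰; z*, ν*, λ*) = 0` and the KKT differential matrix `M` at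
`(z*, ν*, λ*)` (with parameters `θ⁰`) is invertible, then there exist a neighborhood `U`
of `θ⁰` and a differentiable map `φ : U → ℝ^k × ℝ^{m_I} × ℝ^{m_E}` such that
`φ(θ⁰) = (z*, ν*, λ*)` and `G(θ; φ(θ)) = 0` for all `θ ∈ U`. -/
theorem kkt_implicit_function {k mI mE : ℕ}
    (P0 : Matrix (Fin k) (Fin k) ℝ)
    (P : Fin mI → Matrix (Fin k) (Fin k) ℝ) (q : Fin mI → Fin k → ℝ)
    (D : Fin mE → Matrix (Fin k) (Fin k) ℝ) (h : Fin mE → Fin k → ℝ)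
    (hP0 : P0.IsSymm) (hP : ∀ i, (P i).IsSymm) (hD : ∀ j, (D j).IsSymm)
    (θ0 : (Fin k → ℝ) × (Fin mI → ℝ) × (Fin mE → ℝ))
    (zs : Fin k → ℝ) (ν : Fin mI → ℝ) (lam : Fin mE → ℝ)
    (hroot : kktResidualParam P0 P q D h θ0 (zs, ν, lam) = 0)
    (hM : IsUnit (kktMatrix P0 P q θ0.2.1 D h zs ν lam)) :
    ∃ U : Set ((Fin k → ℝ) × (Fin mI → ℝ) × (Fin mE → ℝ)), IsOpen U ∧ θ0 ∈ U ∧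
      ∃ φ : ((Fin k → ℝ) × (Fin mI → ℝ) × (Fin mE → ℝ)) →
          ((Fin k → ℝ) × (Fin mI → ℝ) × (Fin mE → ℝ)),
        DifferentiableOn ℝ φ U ∧ φ θ0 = (zs, ν, lam) ∧
          ∀ θ ∈ U, kktResidualParam P0 P q D h θ (φ θ) = 0 := by
  classical
  set M : Matrix (Fin k ⊕ (Fin mI ⊕ Fin mE)) (Fin k ⊕ (Fin mI ⊕ Fin mE)) ℝ :=
    kktMatrix P0 P q θ0.2.1 D h zs ν lam with hMdef
  haveI : Invertible M := hM.invertible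
  obtain ⟨Lw, hLw, hLweval⟩ := kkt_deriv P0 P q D h θ0 zs ν lam
  set u0 : ((Fin k → ℝ) × (Fin mI → ℝ) × (Fin mE → ℝ)) ×
      ((Fin k → ℝ) × (Fin mI → ℝ) × (Fin mE → ℝ)) := (θ0, (zs, ν, lam)) with hu0def
  set F : (((Fin k → ℝ) × (Fin mI → ℝ) × (Fin mE → ℝ)) ×
      ((Fin k → ℝ) × (Fin mI → ℝ) × (Fin mE → ℝ))) →
      ((Fin k → ℝ) × (Fin mI → ℝ) × (Fin mE → ℝ)) × ((Fin k ⊕ (Fin mI ⊕ Fin mE)) → ℝ) :=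
    fun u => (u.1, kktResidualParam P0 P q D h u.1 u.2) with hFdef
  set L := (ContinuousLinearMap.fst ℝ ((Fin k → ℝ) × (Fin mI → ℝ) × (Fin mE → ℝ))
      ((Fin k → ℝ) × (Fin mI → ℝ) × (Fin mE → ℝ))).prod Lw with hLdef
  have hFderiv : HasFDerivAt F L u0 := (hasFDerivAt_fst).prodMk hLw
  have hLdu : ∀ du, L du = (du.1,
      Sum.elim du.1.1 (Sum.elim (fun i => ν i * du.1.2.1 i) du.1.2.2)
        + M *ᵥ (Sum.elim du.2.1 (Sum.elim du.2.2.1 du.2.2.2))) := by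
    intro du
    have : L du = (du.1, Lw du) := rfl
    rw [this, hLweval du, wtarget_eq P0 P q D h hP hD θ0 zs ν lam du]
  have hinj : Function.Injective L := by
    intro u v huv
    rw [hLdu u, hLdu v] at huv
    obtain ⟨h1, h2⟩ := Prod.ext_iff.1 huv
    rw [h1] at h2
    have h3 : M *ᵥ (Sum.elim u.2.1 (Sum.elim u.2.2.1 u.2.2.2))
        = M *ᵥ (Sum.elim v.2.1 (Sum.elim v.2.2.1 v.2.2.2)) := add_left_cancel h2
    have h4 : Sum.elim u.2.1 (Sum.elim u.2.2.1 u.2.2.2)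
        = Sum.elim v.2.1 (Sum.elim v.2.2.1 v.2.2.2) := by
      have := congrArg (fun y => ⅟M *ᵥ y) h3
      simpa [Matrix.mulVec_mulVec] using this
    refine Prod.ext h1 (Prod.ext ?_ (Prod.ext ?_ ?_))
    · funext a; exact congrFun h4 (Sum.inl a)
    · funext i; exact congrFun h4 (Sum.inr (Sum.inl i))
    · funext j; exact congrFun h4 (Sum.inr (Sum.inr j))
  have hsurj : Function.Surjective L := by
    intro v
    set w : (Fin k ⊕ (Fin mI ⊕ Fin mE)) → ℝ := ⅟M *ᵥ (fun s => v.2 s -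
      Sum.elim v.1.1 (Sum.elim (fun i => ν i * v.1.2.1 i) v.1.2.2) s) with hw
    refine ⟨(v.1, (fun a => w (Sum.inl a), fun i => w (Sum.inr (Sum.inl i)),
      fun j => w (Sum.inr (Sum.inr j)))), ?_⟩
    rw [hLdu]
    refine Prod.ext rfl ?_
    show Sum.elim v.1.1 (Sum.elim (fun i => ν i * v.1.2.1 i) v.1.2.2)
        + M *ᵥ (Sum.elim (fun a => w (Sum.inl a))
          (Sum.elim (fun i => w (Sum.inr (Sum.inl i))) (fun j => w (Sum.inr (Sum.inr j))))) = v.2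
    have h5 : (Sum.elim (fun a => w (Sum.inl a))
        (Sum.elim (fun i => w (Sum.inr (Sum.inl i))) (fun j => w (Sum.inr (Sum.inr j))))) = w := by
      funext s; rcases s with a | i | j <;> rfl
    rw [h5, hw, Matrix.mulVec_mulVec, mul_invOf_self, Matrix.one_mulVec]
    funext s
    simp
  have hbij : Function.Bijective L := ⟨hinj, hsurj⟩
  set Leq := (LinearEquiv.ofBijective
    (L : (((Fin k → ℝ) × (Fin mI → ℝ) × (Fin mE → ℝ)) ×
      ((Fin k → ℝ) × (Fin mI → ℝ) × (Fin mE → ℝ))) →ₗ[ℝ]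
      (((Fin k → ℝ) × (Fin mI → ℝ) × (Fin mE → ℝ)) ×
      ((Fin k ⊕ (Fin mI ⊕ Fin mE)) → ℝ))) hbij).toContinuousLinearEquiv with hLeqdef
  have hcoe : (Leq : (((Fin k → ℝ) × (Fin mI → ℝ) × (Fin mE → ℝ)) ×
      ((Fin k → ℝ) × (Fin mI → ℝ) × (Fin mE → ℝ))) →L[ℝ]
      (((Fin k → ℝ) × (Fin mI → ℝ) × (Fin mE → ℝ)) ×
      ((Fin k ⊕ (Fin mI ⊕ Fin mE)) → ℝ))) = L := ContinuousLinearMap.ext fun u => rfl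
  have hF' : HasFDerivAt F (Leq : _ →L[ℝ] _) u0 := by rw [hcoe]; exact hFderiv
  have hcont : ContDiffAt ℝ 1 F u0 :=
    (ContDiff.prodMk contDiff_fst (resid_smooth P0 P q D h)).contDiffAt
  have hstrict : HasStrictFDerivAt F (Leq : _ →L[ℝ] _) u0 :=
    hcont.hasStrictFDerivAt' hF' one_ne_zero
  set φinv := hstrict.localInverse F Leq u0 with hφinvdef
  have heq : φinv (F u0) = u0 := hstrict.localInverse_apply_image
  have hri : ∀ᶠ y in nhds (F u0), F (φinv y) = y := hstrict.eventually_right_inverse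
  have hCD : ContDiffAt ℝ 1 φinv (F u0) := hcont.to_localInverse hF' one_ne_zero
  have hFu0 : F u0 = (θ0, 0) := by
    rw [hFdef]
    exact Prod.ext rfl hroot
  obtain ⟨t, htmem, htcd⟩ := hCD.contDiffOn le_rfl (by simp)
  obtain ⟨s', hs'mem, hs'⟩ := hri.exists_mem
  have hts : t ∩ s' ∈ nhds (F u0) := Filter.inter_mem htmem hs'mem
  rw [hFu0] at hts heq hCD
  obtain ⟨V, hVsub, hVopen, hV0⟩ := mem_nhds_iff.1 hts
  refine ⟨{θ | (θ, (0 : (Fin k ⊕ (Fin mI ⊕ Fin mE)) → ℝ)) ∈ V}, ?_, hV0, ?_⟩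
  · exact hVopen.preimage (continuous_id.prodMk continuous_const)
  · refine ⟨fun θ => (φinv (θ, 0)).2, ?_, ?_, ?_⟩
    · have hd1 : DifferentiableOn ℝ (fun θ : (Fin k → ℝ) × (Fin mI → ℝ) × (Fin mE → ℝ) =>
          φinv (θ, 0)) {θ | (θ, (0 : (Fin k ⊕ (Fin mI ⊕ Fin mE)) → ℝ)) ∈ V} := by
        refine (htcd.differentiableOn one_ne_zero).comp
          ((differentiable_id.prodMk (differentiable_const _)).differentiableOn) ?_
        intro θ hθ
        exact (hVsub hθ).1
      exact hd1.snd
    · show (φinv (θ0, 0)).2 = (zs, ν, lam)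
      rw [heq]
    · intro θ hθ
      have hmem : (θ, (0 : (Fin k ⊕ (Fin mI ⊕ Fin mE)) → ℝ)) ∈ s' := (hVsub hθ).2
      have hFeq : F (φinv (θ, 0)) = (θ, 0) := hs' _ hmem
      have h1 : (φinv (θ, 0)).1 = θ := congrArg Prod.fst hFeq
      rw [hFdef] at hFeq
      obtain ⟨h1', h2⟩ := Prod.ext_iff.1 hFeq
      have h2' : kktResidualParam P0 P q D h (φinv (θ, 0)).1 (φinv (θ, 0)).2 = 0 := h2
      rw [h1] at h2'
      exact h2'
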